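/- (Marsaglia–Bray polar method) Let D = {(u₁,u₂) ∈ ℝ² : 0 < u₁² + u₂² < 1} and let P be the uniform probability measure on D (Lebesgue measure on D normalized by its area). Define S(u₁,u₂) = (u₁·√(−2 ln w / w), u₂·√(−2 ln w / w)) where w = u₁² + u₂². Then the pushforward of P under S equals the product measure N(0,1) ⊗ N(0,1), i.e., the two output coordinates are independent standard Gaussian random variables. -/

import Mathlib

open MeasureTheory ProbabilityTheory Set
open scoped ENNReal NNReal Real

noncomputable section MB

namespace MB

def Dset : Set (ℝ × ℝ) := {u | 0 < u.1 ^ 2 + u.2 ^ 2 ∧ u.1 ^ 2 + u.2 ^ 2 < 1}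

lemma isOpen_Dset : IsOpen Dset := by
  have hw : Continuous (fun u : ℝ × ℝ => u.1 ^ 2 + u.2 ^ 2) := by fun_prop
  exact (isOpen_lt continuous_const hw).inter (isOpen_lt hw continuous_const)

def S (u : ℝ × ℝ) : ℝ × ℝ :=
  (u.1 * Real.sqrt (-2 * Real.log (u.1 ^ 2 + u.2 ^ 2) / (u.1 ^ 2 + u.2 ^ 2)),
   u.2 * Real.sqrt (-2 * Real.log (u.1 ^ 2 + u.2 ^ 2) / (u.1 ^ 2 + u.2 ^ 2)))

lemma measurable_S : Measurable S := by
  have hw : Measurable (fun u : ℝ × ℝ => u.1 ^ 2 + u.2 ^ 2) :=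
    (measurable_fst.pow_const 2).add (measurable_snd.pow_const 2)
  have hr : Measurable (fun u : ℝ × ℝ =>
      Real.sqrt (-2 * Real.log (u.1 ^ 2 + u.2 ^ 2) / (u.1 ^ 2 + u.2 ^ 2))) :=
    (((Real.measurable_log.comp hw).const_mul (-2)).div hw).sqrt
  exact (measurable_fst.mul hr).prodMk (measurable_snd.mul hr)

def fder (u : ℝ × ℝ) : ℝ × ℝ →L[ℝ] ℝ × ℝ :=
  let w := u.1 ^ 2 + u.2 ^ 2
  let g := Real.sqrt (-2 * Real.log w / w)
  let k := (1 / (2 * g)) * ((-2 * w⁻¹ * w - -2 * Real.log w * 1) / w ^ 2)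
  LinearMap.toContinuousLinearMap (Matrix.toLin (Module.Basis.finTwoProd ℝ) (Module.Basis.finTwoProd ℝ)
    !![g + k * (2 * u.1) * u.1, k * (2 * u.2) * u.1;
       k * (2 * u.1) * u.2, g + k * (2 * u.2) * u.2])

lemma hasFDerivAt_S (u : ℝ × ℝ) (h0 : 0 < u.1 ^ 2 + u.2 ^ 2) (h1 : u.1 ^ 2 + u.2 ^ 2 < 1) :
    HasFDerivAt S (fder u) u := by
  have hlog : Real.log (u.1 ^ 2 + u.2 ^ 2) < 0 := Real.log_neg h0 h1
  have hpos : 0 < -2 * Real.log (u.1 ^ 2 + u.2 ^ 2) / (u.1 ^ 2 + u.2 ^ 2) :=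
    div_pos (by linarith) h0
  have hwd : HasFDerivAt (fun u : ℝ × ℝ => u.1 ^ 2 + u.2 ^ 2)
      (((2 : ℕ) * u.1 ^ 1) • ContinuousLinearMap.fst ℝ ℝ ℝ +
       ((2 : ℕ) * u.2 ^ 1) • ContinuousLinearMap.snd ℝ ℝ ℝ) u :=
    ((hasDerivAt_pow 2 u.1).comp_hasFDerivAt u hasFDerivAt_fst).add
      ((hasDerivAt_pow 2 u.2).comp_hasFDerivAt u hasFDerivAt_snd)
  have hh : HasDerivAt (fun w : ℝ => -2 * Real.log w / w)
      ((-2 * (u.1 ^ 2 + u.2 ^ 2)⁻¹ * (u.1 ^ 2 + u.2 ^ 2) -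
        -2 * Real.log (u.1 ^ 2 + u.2 ^ 2) * 1) / (u.1 ^ 2 + u.2 ^ 2) ^ 2)
      (u.1 ^ 2 + u.2 ^ 2) :=
    (((Real.hasDerivAt_log h0.ne').const_mul (-2)).div (hasDerivAt_id _) h0.ne')
  have hsq : HasDerivAt Real.sqrt
      (1 / (2 * Real.sqrt (-2 * Real.log (u.1 ^ 2 + u.2 ^ 2) / (u.1 ^ 2 + u.2 ^ 2))))
      (-2 * Real.log (u.1 ^ 2 + u.2 ^ 2) / (u.1 ^ 2 + u.2 ^ 2)) :=
    Real.hasDerivAt_sqrt hpos.ne'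
  have hc : HasFDerivAt (fun u : ℝ × ℝ =>
      Real.sqrt (-2 * Real.log (u.1 ^ 2 + u.2 ^ 2) / (u.1 ^ 2 + u.2 ^ 2)))
      ((1 / (2 * Real.sqrt (-2 * Real.log (u.1 ^ 2 + u.2 ^ 2) / (u.1 ^ 2 + u.2 ^ 2)))) •
        (((-2 * (u.1 ^ 2 + u.2 ^ 2)⁻¹ * (u.1 ^ 2 + u.2 ^ 2) -
           -2 * Real.log (u.1 ^ 2 + u.2 ^ 2) * 1) / (u.1 ^ 2 + u.2 ^ 2) ^ 2) •
         (((2 : ℕ) * u.1 ^ 1) • ContinuousLinearMap.fst ℝ ℝ ℝ +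
          ((2 : ℕ) * u.2 ^ 1) • ContinuousLinearMap.snd ℝ ℝ ℝ))) u :=
    hsq.comp_hasFDerivAt u (hh.comp_hasFDerivAt u hwd :)
  have h1' := HasFDerivAt.mul hasFDerivAt_fst hc
  have h2' := HasFDerivAt.mul hasFDerivAt_snd hc
  have hS : HasFDerivAt S _ u := HasFDerivAt.prodMk h1' h2'
  unfold fder
  rw [Matrix.toLin_finTwoProd_toContinuousLinearMap]
  refine hS.congr_fderiv ?_
  apply ContinuousLinearMap.ext
  intro v
  apply Prod.ext <;>
  · simp [ContinuousLinearMap.smul_apply, ContinuousLinearMap.prod_apply,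
      ContinuousLinearMap.add_apply, smul_eq_mul]
    ring

lemma det_fder (u : ℝ × ℝ) (h0 : 0 < u.1 ^ 2 + u.2 ^ 2) (h1 : u.1 ^ 2 + u.2 ^ 2 < 1) :
    (fder u).det = -(2 / (u.1 ^ 2 + u.2 ^ 2)) := by
  have hlog : Real.log (u.1 ^ 2 + u.2 ^ 2) < 0 := Real.log_neg h0 h1
  have hpos : 0 < -2 * Real.log (u.1 ^ 2 + u.2 ^ 2) / (u.1 ^ 2 + u.2 ^ 2) :=
    div_pos (by linarith) h0
  have hg : 0 < Real.sqrt (-2 * Real.log (u.1 ^ 2 + u.2 ^ 2) / (u.1 ^ 2 + u.2 ^ 2)) :=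
    Real.sqrt_pos.2 hpos
  have hg2 : Real.sqrt (-2 * Real.log (u.1 ^ 2 + u.2 ^ 2) / (u.1 ^ 2 + u.2 ^ 2)) ^ 2
      = -2 * Real.log (u.1 ^ 2 + u.2 ^ 2) / (u.1 ^ 2 + u.2 ^ 2) := Real.sq_sqrt hpos.le
  have hw0 : (u.1 ^ 2 + u.2 ^ 2) ≠ 0 := h0.ne'
  unfold fder
  simp only [LinearMap.det_toContinuousLinearMap, LinearMap.det_toLin, Matrix.det_fin_two_of]
  set w := u.1 ^ 2 + u.2 ^ 2 with hw
  set g := Real.sqrt (-2 * Real.log w / w) with hgdef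
  set k := (1 / (2 * g)) * ((-2 * w⁻¹ * w - -2 * Real.log w * 1) / w ^ 2) with hk
  have hgne : g ≠ 0 := hg.ne'
  have e1 : (g + k * (2 * u.1) * u.1) * (g + k * (2 * u.2) * u.2) -
      k * (2 * u.2) * u.1 * (k * (2 * u.1) * u.2) = g ^ 2 + 2 * k * g * (u.1 ^ 2 + u.2 ^ 2) := by
    ring
  rw [e1, ← hw]
  have e2 : 2 * k * g = (-2 * w⁻¹ * w - -2 * Real.log w * 1) / w ^ 2 := by
    rw [hk]; field_simp
  rw [e2, hg2]
  field_simp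
  ring

lemma norm_S (u : ℝ × ℝ) (h0 : 0 < u.1 ^ 2 + u.2 ^ 2) (h1 : u.1 ^ 2 + u.2 ^ 2 < 1) :
    (S u).1 ^ 2 + (S u).2 ^ 2 = -2 * Real.log (u.1 ^ 2 + u.2 ^ 2) := by
  have hlog : Real.log (u.1 ^ 2 + u.2 ^ 2) < 0 := Real.log_neg h0 h1
  have hpos : 0 ≤ -2 * Real.log (u.1 ^ 2 + u.2 ^ 2) / (u.1 ^ 2 + u.2 ^ 2) :=
    (div_pos (by linarith) h0).le
  have hg2 : Real.sqrt (-2 * Real.log (u.1 ^ 2 + u.2 ^ 2) / (u.1 ^ 2 + u.2 ^ 2)) ^ 2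
      = -2 * Real.log (u.1 ^ 2 + u.2 ^ 2) / (u.1 ^ 2 + u.2 ^ 2) := Real.sq_sqrt hpos
  show (u.1 * _) ^ 2 + (u.2 * _) ^ 2 = _
  rw [mul_pow, mul_pow, ← add_mul, hg2]
  field_simp

lemma injOn_S : InjOn S Dset := by
  intro u hu v hv heq
  have hnu := norm_S u hu.1 hu.2
  have hnv := norm_S v hv.1 hv.2
  rw [heq] at hnu
  have hlogeq : Real.log (u.1 ^ 2 + u.2 ^ 2) = Real.log (v.1 ^ 2 + v.2 ^ 2) := by linarith
  have hweq : u.1 ^ 2 + u.2 ^ 2 = v.1 ^ 2 + v.2 ^ 2 := by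
    rw [← Real.exp_log hu.1, ← Real.exp_log hv.1, hlogeq]
  have hlog : Real.log (u.1 ^ 2 + u.2 ^ 2) < 0 := Real.log_neg hu.1 hu.2
  have hg : 0 < Real.sqrt (-2 * Real.log (u.1 ^ 2 + u.2 ^ 2) / (u.1 ^ 2 + u.2 ^ 2)) :=
    Real.sqrt_pos.2 (div_pos (by linarith) hu.1)
  have h1 : (S u).1 = (S v).1 := by rw [heq]
  have h2 : (S u).2 = (S v).2 := by rw [heq]
  unfold S at h1 h2
  simp only at h1 h2
  rw [← hweq] at h1 h2
  exact Prod.ext (mul_right_cancel₀ hg.ne' h1) (mul_right_cancel₀ hg.ne' h2)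

lemma image_S : S '' Dset = ({((0 : ℝ), (0 : ℝ))}ᶜ : Set (ℝ × ℝ)) := by
  ext x
  simp only [mem_image, mem_compl_iff, mem_singleton_iff]
  constructor
  · rintro ⟨u, hu, rfl⟩
    intro hx0
    have hn := norm_S u hu.1 hu.2
    have hlog : Real.log (u.1 ^ 2 + u.2 ^ 2) < 0 := Real.log_neg hu.1 hu.2
    have h0' : ((0:ℝ), (0:ℝ)).1 ^ 2 + ((0:ℝ), (0:ℝ)).2 ^ 2 = -2 * Real.log (u.1 ^ 2 + u.2 ^ 2) := by
      rw [← hx0]; exact hn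
    simp only [] at h0'
    norm_num at h0'
    obtain ⟨ha, hb⟩ := hu
    rcases h0' with h | h | h <;> linarith
  · intro hx
    have hq : 0 < x.1 ^ 2 + x.2 ^ 2 := by
      rcases eq_or_ne x.1 0 with h | h
      · rcases eq_or_ne x.2 0 with h2 | h2
        · exact absurd (Prod.ext h h2) hx
        · positivity
      · positivity
    set q := x.1 ^ 2 + x.2 ^ 2 with hqdef
    set e := Real.exp (-(q / 2)) with hedef
    have he : 0 < e := Real.exp_pos _
    have he1 : e < 1 := Real.exp_lt_one_iff.2 (by linarith)
    set t := Real.sqrt (e / q) with htdef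
    have ht2 : t ^ 2 = e / q := Real.sq_sqrt (div_nonneg he.le hq.le)
    have hwu : (t * x.1) ^ 2 + (t * x.2) ^ 2 = e := by
      have : (t * x.1) ^ 2 + (t * x.2) ^ 2 = t ^ 2 * q := by rw [hqdef]; ring
      rw [this, ht2]
      field_simp
    refine ⟨(t * x.1, t * x.2), ⟨?_, ?_⟩, ?_⟩
    · show 0 < (t * x.1) ^ 2 + (t * x.2) ^ 2
      rw [hwu]; exact he
    · show (t * x.1) ^ 2 + (t * x.2) ^ 2 < 1
      rw [hwu]; exact he1
    · unfold S
      simp only []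
      rw [hwu, Real.log_exp]
      have harg : -2 * -(q / 2) / e = q / e := by ring
      rw [harg]
      have hte : t * Real.sqrt (q / e) = 1 := by
        rw [htdef, ← Real.sqrt_mul (div_nonneg he.le hq.le)]
        have : e / q * (q / e) = 1 := by field_simp
        rw [this, Real.sqrt_one]
      have hx1 : t * x.1 * Real.sqrt (q / e) = x.1 := by
        calc t * x.1 * Real.sqrt (q / e) = x.1 * (t * Real.sqrt (q / e)) := by ring
        _ = x.1 := by rw [hte, mul_one]
      have hx2 : t * x.2 * Real.sqrt (q / e) = x.2 := by
        calc t * x.2 * Real.sqrt (q / e) = x.2 * (t * Real.sqrt (q / e)) := by ring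
        _ = x.2 := by rw [hte, mul_one]
      rw [hx1, hx2]

lemma map_withDensity_comp {α β : Type*} [MeasurableSpace α] [MeasurableSpace β]
    (μ : Measure α) {f : α → β} (hf : Measurable f) {g : β → ℝ≥0∞} (hg : Measurable g) :
    (μ.withDensity (fun a => g (f a))).map f = (μ.map f).withDensity g := by
  ext s hs
  rw [Measure.map_apply hf hs, withDensity_apply _ (hf hs), withDensity_apply _ hs,
    setLIntegral_map hs hg hf]

lemma gauss_prod :
    (gaussianReal 0 1).prod (gaussianReal 0 1) =
      volume.withDensity (fun p : ℝ × ℝ => gaussianPDF 0 1 p.1 * gaussianPDF 0 1 p.2) := by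
  refine Measure.prod_eq fun s t hs ht => ?_
  rw [withDensity_apply _ (hs.prod ht), Measure.volume_eq_prod, ← Measure.prod_restrict,
    lintegral_prod_mul (measurable_gaussianPDF 0 1).aemeasurable
      (measurable_gaussianPDF 0 1).aemeasurable,
    gaussianReal_apply 0 one_ne_zero s, gaussianReal_apply 0 one_ne_zero t]

lemma pointwise (u : ℝ × ℝ) (hu : u ∈ Dset) :
    ENNReal.ofReal (2 / (u.1 ^ 2 + u.2 ^ 2)) *
      (gaussianPDF 0 1 (S u).1 * gaussianPDF 0 1 (S u).2) = ENNReal.ofReal π⁻¹ := by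
  obtain ⟨h0, h1⟩ := hu
  have h2pi : (0:ℝ) < 2 * π := by positivity
  have hn := norm_S u h0 h1
  have key : ∀ c x y : ℝ, (c * Real.exp x) * (c * Real.exp y) = c ^ 2 * Real.exp (x + y) := by
    intro c x y; rw [Real.exp_add]; ring
  have hprod : gaussianPDFReal 0 1 (S u).1 * gaussianPDFReal 0 1 (S u).2 =
      (2 * π)⁻¹ * (u.1 ^ 2 + u.2 ^ 2) := by
    simp only [gaussianPDFReal, NNReal.coe_one, mul_one, sub_zero]
    rw [key, inv_pow, Real.sq_sqrt h2pi.le]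
    congr 1
    have harg : -(S u).1 ^ 2 / 2 + -(S u).2 ^ 2 / 2 = Real.log (u.1 ^ 2 + u.2 ^ 2) := by
      have : (S u).1 ^ 2 + (S u).2 ^ 2 = -2 * Real.log (u.1 ^ 2 + u.2 ^ 2) := hn
      linarith
    rw [harg, Real.exp_log h0]
  have hg1 : 0 ≤ gaussianPDFReal 0 1 (S u).1 := gaussianPDFReal_nonneg 0 1 _
  show ENNReal.ofReal (2 / (u.1 ^ 2 + u.2 ^ 2)) *
      (ENNReal.ofReal (gaussianPDFReal 0 1 (S u).1) * ENNReal.ofReal (gaussianPDFReal 0 1 (S u).2)) =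
      ENNReal.ofReal π⁻¹
  rw [← ENNReal.ofReal_mul hg1, hprod, ← ENNReal.ofReal_mul (by positivity)]
  congr 1
  field_simp

lemma main : Measure.map S ((volume Dset)⁻¹ • volume.restrict Dset) =
    (gaussianReal 0 1).prod (gaussianReal 0 1) := by
  have hD : MeasurableSet Dset := isOpen_Dset.measurableSet
  set G : ℝ × ℝ → ℝ≥0∞ := fun p => gaussianPDF 0 1 p.1 * gaussianPDF 0 1 p.2 with hGdef
  have hGm : Measurable G :=
    ((measurable_gaussianPDF 0 1).comp measurable_fst).mul
      ((measurable_gaussianPDF 0 1).comp measurable_snd)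
  set ρ : ℝ × ℝ → ℝ≥0∞ := fun u => ENNReal.ofReal (2 / (u.1 ^ 2 + u.2 ^ 2)) with hρdef
  have hwm : Measurable (fun u : ℝ × ℝ => u.1 ^ 2 + u.2 ^ 2) :=
    (measurable_fst.pow_const 2).add (measurable_snd.pow_const 2)
  have hρm : Measurable ρ := ENNReal.measurable_ofReal.comp (measurable_const.div hwm)
  have T1 : Measure.map S
      ((volume.restrict Dset).withDensity fun u => ENNReal.ofReal |(fder u).det|) =
      volume.restrict (S '' Dset) :=
    map_withDensity_abs_det_fderiv_eq_addHaar volume hD.nullMeasurableSet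
      (fun u hu => (hasFDerivAt_S u hu.1 hu.2).hasFDerivWithinAt) injOn_S
  have T2 : volume.restrict (S '' Dset) = volume := by
    rw [image_S, Measure.restrict_congr_set (t := univ) ?_, Measure.restrict_univ]
    rw [ae_eq_univ, compl_compl]
    exact measure_singleton _
  have hdens : ((volume.restrict Dset).withDensity fun u => ENNReal.ofReal |(fder u).det|) =
      (volume.restrict Dset).withDensity ρ := by
    apply withDensity_congr_ae
    filter_upwards [self_mem_ae_restrict hD] with u hu
    rw [det_fder u hu.1 hu.2, abs_neg, abs_of_pos (div_pos two_pos hu.1)]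
  have T4 : ((volume.restrict Dset).withDensity (fun u => ρ u * G (S u))) =
      (ENNReal.ofReal π⁻¹) • volume.restrict Dset := by
    rw [← withDensity_const]
    apply withDensity_congr_ae
    filter_upwards [self_mem_ae_restrict hD] with u hu
    exact pointwise u hu
  have key : Measure.map S ((ENNReal.ofReal π⁻¹) • volume.restrict Dset) =
      (gaussianReal 0 1).prod (gaussianReal 0 1) := by
    rw [← T4]
    have hGS : Measurable fun u => G (S u) := hGm.comp measurable_S
    have hmul : (fun u => ρ u * G (S u)) = (ρ * fun u => G (S u)) := rfl
    rw [hmul, withDensity_mul _ hρm hGS, ← hdens,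
      map_withDensity_comp _ measurable_S hGm, T1, T2, gauss_prod]
  have huniv := congrArg (fun μ : Measure (ℝ × ℝ) => μ univ) key
  simp only [Measure.map_apply measurable_S MeasurableSet.univ, preimage_univ,
    Measure.smul_apply, smul_eq_mul, Measure.restrict_apply_univ, measure_univ] at huniv
  have hvol : (volume Dset)⁻¹ = ENNReal.ofReal π⁻¹ :=
    (ENNReal.eq_inv_of_mul_eq_one_left huniv).symm
  rw [hvol]
  exact key

end MB

end MB

/-- The Marsaglia–Bray polar method: let `D = {(u₁,u₂) : 0 < u₁² + u₂² < 1}` and let the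
uniform probability measure on `D` be Lebesgue measure restricted to `D` normalized by
its total mass.  Then the pushforward of this uniform measure under
`(u₁,u₂) ↦ (u₁·√(−2 ln w / w), u₂·√(−2 ln w / w))` with `w = u₁² + u₂²` is the product
of two standard Gaussian measures `N(0,1) ⊗ N(0,1)`. -/
theorem stmt_3 :
    let D : Set (ℝ × ℝ) := {u | 0 < u.1 ^ 2 + u.2 ^ 2 ∧ u.1 ^ 2 + u.2 ^ 2 < 1}
    Measure.map (fun u : ℝ × ℝ =>
        (u.1 * Real.sqrt (-2 * Real.log (u.1 ^ 2 + u.2 ^ 2) / (u.1 ^ 2 + u.2 ^ 2)),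
         u.2 * Real.sqrt (-2 * Real.log (u.1 ^ 2 + u.2 ^ 2) / (u.1 ^ 2 + u.2 ^ 2))))
      ((volume D)⁻¹ • volume.restrict D) =
      (gaussianReal 0 1).prod (gaussianReal 0 1) := by
  intro D
  exact MB.main
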